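/- Let 𝒳 be a finite set with at least 2 elements and for each ordered pair (k,k') with k ≠ k' let λ_{kk'} : [0,∞) → (0,∞) be measurable with ‖λ_{kk'}‖_∞ < ∞, C := Σ_{(k,k')} ‖λ_{kk'}‖_∞ < ∞. Suppose for each k there exists k' ≠ k with ess inf λ_{kk'} > 0. Then inf_{k ∈ 𝒳, y ≥ 0} P(k,y) > 0, where P(k,y) := ∫₀^∞ exp(-∫₀^{y'} Σ_{k'≠k} max(λ_{kk'}(t),λ_{kk'}(y+t)) dt) (Σ_{k'≠k} min(λ_{kk'}(y'),λ_{kk'}(y+y'))) dy'. -/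

import Mathlib

open MeasureTheory Set

/-- Key estimate in Theorem 4.6: with bounded rates that each admit,
from every state `k`, some target `k'` whose rate has positive essential
infimum, the merging probability `P(k,y)` is bounded below uniformly in
`k` and `y ≥ 0` by a positive constant. -/
theorem stmt_11 {X : Type*} [Fintype X] [DecidableEq X]
    (hcard : 2 ≤ Fintype.card X)
    (lam : X → X → ℝ → ℝ)
    (hmeas : ∀ k k' : X, k' ≠ k → Measurable (lam k k'))
    (hpos : ∀ (k k' : X), k' ≠ k → ∀ y : ℝ, 0 ≤ y → 0 < lam k k' y)
    (B : X → X → ℝ)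
    (hB : ∀ (k k' : X), k' ≠ k → ∀ y : ℝ, 0 ≤ y → lam k k' y ≤ B k k')
    (hessinf : ∀ k : X, ∃ k' : X, k' ≠ k ∧ ∃ δ : ℝ, 0 < δ ∧
        ∀ᵐ y ∂(volume.restrict (Ioi (0:ℝ))), δ ≤ lam k k' y)
    (P : X → ℝ → ℝ)
    (hP : ∀ (k : X) (y : ℝ), P k y =
      ∫ y' in Ioi (0:ℝ),
        Real.exp (-∫ t in (0:ℝ)..y',
            ∑ k' ∈ Finset.univ.erase k, max (lam k k' t) (lam k k' (y + t)))
          * (∑ k' ∈ Finset.univ.erase k, min (lam k k' y') (lam k k' (y + y')))) :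
    ∃ ε : ℝ, 0 < ε ∧ ∀ (k : X) (y : ℝ), 0 ≤ y → ε ≤ P k y := by
  -- It suffices to find a positive lower bound for each fixed `k`.
  have key : ∀ k : X, ∃ ε : ℝ, 0 < ε ∧ ∀ y : ℝ, 0 ≤ y → ε ≤ P k y := by
    intro k
    obtain ⟨k₀, hk₀, δ, hδ, hae⟩ := hessinf k
    set S : Finset X := Finset.univ.erase k with hS
    have hk₀S : k₀ ∈ S := Finset.mem_erase.mpr ⟨hk₀, Finset.mem_univ _⟩
    have hne : ∀ k' ∈ S, k' ≠ k := fun k' h => Finset.ne_of_mem_erase h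
    set C : ℝ := ∑ k' ∈ S, B k k' with hCdef
    have hBpos : ∀ k' ∈ S, 0 < B k k' := fun k' h =>
      lt_of_lt_of_le (hpos k k' (hne k' h) 0 le_rfl) (hB k k' (hne k' h) 0 le_rfl)
    have hC : 0 < C := Finset.sum_pos hBpos ⟨k₀, hk₀S⟩
    -- the candidate lower bound
    have hexpint : IntegrableOn (fun y' : ℝ => Real.exp (-C * y')) (Ioi 0) volume :=
      exp_neg_integrableOn_Ioi 0 hC
    set I : ℝ := ∫ y' in Ioi (0:ℝ), Real.exp (-C * y') with hIdef
    have hI : 0 < I := by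
      rw [hIdef]
      rw [setIntegral_pos_iff_support_of_nonneg_ae
        (Filter.Eventually.of_forall fun x => (Real.exp_pos _).le) hexpint]
      have : Function.support (fun y' : ℝ => Real.exp (-C * y')) = univ := by
        ext x; simp [Function.mem_support, Real.exp_ne_zero]
      rw [this, univ_inter]
      simp [Real.volume_Ioi]
    refine ⟨δ * I, mul_pos hδ hI, ?_⟩
    intro y hy
    -- a.e. statements
    have hae' : ∀ᵐ t : ℝ, t ∈ Ioi (0:ℝ) → δ ≤ lam k k₀ t :=
      (ae_restrict_iff' measurableSet_Ioi).mp hae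
    have hae2 : ∀ᵐ t : ℝ, (y + t) ∈ Ioi (0:ℝ) → δ ≤ lam k k₀ (y + t) :=
      (measurePreserving_add_left (volume : Measure ℝ) y).quasiMeasurePreserving.ae hae'
    -- the integrand pieces
    set g : ℝ → ℝ := fun t => ∑ k' ∈ S, max (lam k k' t) (lam k k' (y + t)) with hgdef
    set g' : ℝ → ℝ := fun t => if 0 ≤ t then g t else 0 with hg'def
    set m : ℝ → ℝ := fun y' => ∑ k' ∈ S, min (lam k k' y') (lam k k' (y + y')) with hmdef
    have hmeas2 : ∀ k' ∈ S, Measurable (fun t : ℝ => lam k k' (y + t)) := fun k' h =>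
      (hmeas k k' (hne k' h)).comp (measurable_id.const_add y)
    have hgmeas : Measurable g :=
      Finset.measurable_sum _ fun k' h => (hmeas k k' (hne k' h)).max (hmeas2 k' h)
    have hg'meas : Measurable g' :=
      Measurable.ite (measurableSet_le measurable_const measurable_id) hgmeas measurable_const
    have hmmeas : Measurable m :=
      Finset.measurable_sum _ fun k' h => (hmeas k k' (hne k' h)).min (hmeas2 k' h)
    -- bounds on g'
    have hgle : ∀ t : ℝ, 0 ≤ t → g t ≤ C := by
      intro t ht
      refine Finset.sum_le_sum fun k' h => max_le (hB k k' (hne k' h) t ht) ?_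
      exact hB k k' (hne k' h) (y + t) (by linarith)
    have hgnn : ∀ t : ℝ, 0 ≤ t → 0 ≤ g t := by
      intro t ht
      refine Finset.sum_nonneg fun k' h => le_max_of_le_left (hpos k k' (hne k' h) t ht).le
    have hg'le : ∀ t : ℝ, g' t ≤ C := by
      intro t; rw [hg'def]; dsimp only
      split_ifs with h
      · exact hgle t h
      · exact hC.le
    have hg'nn : ∀ t : ℝ, 0 ≤ g' t := by
      intro t; rw [hg'def]; dsimp only
      split_ifs with h
      · exact hgnn t h
      · exact le_rfl
    have hint : ∀ a b : ℝ, IntervalIntegrable g' volume a b := by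
      intro a b
      rw [intervalIntegrable_iff]
      refine Integrable.mono' (g := fun _ => C) ((integrableOn_const_iff).mpr (Or.inr measure_Ioc_lt_top))
        hg'meas.aestronglyMeasurable.restrict
        (Filter.Eventually.of_forall fun t => ?_)
      rw [Real.norm_eq_abs, abs_of_nonneg (hg'nn t)]
      exact hg'le t
    set G : ℝ → ℝ := fun x => ∫ t in (0:ℝ)..x, g' t with hGdef
    have hGcont : Continuous G := intervalIntegral.continuous_primitive hint 0
    -- on Ioi 0 the interval integral of g agrees with G
    have hGg : ∀ y' : ℝ, 0 < y' → (∫ t in (0:ℝ)..y', g t) = G y' := by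
      intro y' hy'
      refine intervalIntegral.integral_congr fun t ht => ?_
      rw [uIcc_of_le hy'.le] at ht
      rw [hg'def]; simp [ht.1]
    -- upper bound on G
    have hGub : ∀ y' : ℝ, 0 < y' → G y' ≤ y' * C := by
      intro y' hy'
      have h1 : (∫ t in (0:ℝ)..y', g' t) ≤ ∫ _t in (0:ℝ)..y', C :=
        intervalIntegral.integral_mono_on hy'.le (hint 0 y') intervalIntegrable_const
          fun t _ => hg'le t
      simpa using h1
    -- lower bound on G
    have hGlb : ∀ y' : ℝ, 0 < y' → y' * δ ≤ G y' := by
      intro y' hy'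
      have hzero : ∀ᵐ t ∂(volume.restrict (Icc (0:ℝ) y')), t ≠ 0 := by
        refine ae_iff.mpr ?_
        have : {t : ℝ | ¬t ≠ 0} = {0} := by ext t; simp
        rw [this]
        exact le_antisymm
          (le_trans (Measure.restrict_le_self _) (by simp [Real.volume_singleton]))
          zero_le
      have hmem : ∀ᵐ t ∂(volume.restrict (Icc (0:ℝ) y')), t ∈ Icc (0:ℝ) y' :=
        ae_restrict_mem measurableSet_Icc
      have hlam : ∀ᵐ t ∂(volume.restrict (Icc (0:ℝ) y')), (t ∈ Ioi (0:ℝ) → δ ≤ lam k k₀ t) :=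
        ae_restrict_of_ae hae'
      have hle : (fun _ : ℝ => δ) ≤ᵐ[volume.restrict (Icc (0:ℝ) y')] g' := by
        filter_upwards [hzero, hmem, hlam] with t ht0 htm htl
        have htpos : 0 < t := lt_of_le_of_ne htm.1 (Ne.symm ht0)
        have h1 : δ ≤ lam k k₀ t := htl htpos
        have h2 : lam k k₀ t ≤ g t := by
          refine le_trans (le_max_left _ _) (Finset.single_le_sum (f := fun k' =>
            max (lam k k' t) (lam k k' (y + t))) (fun k' h => ?_) hk₀S)
          exact le_max_of_le_left (hpos k k' (hne k' h) t htpos.le).le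
        rw [hg'def]; simp only [htpos.le, if_true]
        linarith
      have h1 : (∫ _t in (0:ℝ)..y', δ) ≤ ∫ t in (0:ℝ)..y', g' t :=
        intervalIntegral.integral_mono_ae_restrict hy'.le intervalIntegrable_const
          (hint 0 y') hle
      simpa using h1
    -- bounds on m
    have hmub : ∀ y' : ℝ, 0 < y' → m y' ≤ C := by
      intro y' hy'
      exact Finset.sum_le_sum fun k' h =>
        le_trans (min_le_left _ _) (hB k k' (hne k' h) y' hy'.le)
    have hmnn : ∀ y' : ℝ, 0 < y' → 0 ≤ m y' := by
      intro y' hy'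
      refine Finset.sum_nonneg fun k' h =>
        le_min (hpos k k' (hne k' h) y' hy'.le).le (hpos k k' (hne k' h) (y + y') (by linarith)).le
    -- the integrand and its regularized version
    set f : ℝ → ℝ := fun y' => Real.exp (-∫ t in (0:ℝ)..y', g t) * m y' with hfdef
    set f2 : ℝ → ℝ := fun y' => Real.exp (-(G y')) * m y' with hf2def
    have hfeq : EqOn f f2 (Ioi (0:ℝ)) := by
      intro y' hy'
      rw [hfdef, hf2def]; dsimp only
      rw [hGg y' hy']
    have hf2meas : AEStronglyMeasurable f2 (volume.restrict (Ioi (0:ℝ))) :=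
      ((Real.measurable_exp.comp hGcont.neg.measurable).mul hmmeas).aestronglyMeasurable.restrict
    have hboundint : IntegrableOn (fun y' : ℝ => Real.exp (-δ * y') * C) (Ioi 0) volume :=
      (exp_neg_integrableOn_Ioi 0 hδ).mul_const C
    have hf2int : IntegrableOn f2 (Ioi 0) volume := by
      refine Integrable.mono' (g := fun y' => Real.exp (-δ * y') * C) hboundint hf2meas ?_
      filter_upwards [ae_restrict_mem measurableSet_Ioi] with y' hy'
      have hy'0 : (0:ℝ) < y' := hy'
      rw [hf2def]; dsimp only
      rw [Real.norm_eq_abs, abs_of_nonneg (mul_nonneg (Real.exp_pos _).le (hmnn y' hy'0))]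
      have h1 : Real.exp (-(G y')) ≤ Real.exp (-δ * y') := by
        apply Real.exp_le_exp.mpr
        have := hGlb y' hy'0
        nlinarith
      exact mul_le_mul h1 (hmub y' hy'0) (hmnn y' hy'0) (Real.exp_pos _).le
    have hfint : IntegrableOn f (Ioi 0) volume :=
      hf2int.congr_fun hfeq.symm measurableSet_Ioi
    -- lower bound function integrable
    have hlowint : IntegrableOn (fun y' : ℝ => δ * Real.exp (-C * y')) (Ioi 0) volume :=
      hexpint.const_mul δ
    -- compare
    have hcompare : (∫ y' in Ioi (0:ℝ), δ * Real.exp (-C * y')) ≤ ∫ y' in Ioi (0:ℝ), f y' := by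
      refine integral_mono_ae hlowint hfint ?_
      have h1 : ∀ᵐ y' ∂(volume.restrict (Ioi (0:ℝ))), δ ≤ lam k k₀ y' := hae
      have h2 : ∀ᵐ y' ∂(volume.restrict (Ioi (0:ℝ))), ((y + y') ∈ Ioi (0:ℝ) →
          δ ≤ lam k k₀ (y + y')) := ae_restrict_of_ae hae2
      filter_upwards [h1, h2, ae_restrict_mem measurableSet_Ioi] with y' hy1 hy2 hy'
      have hy'0 : (0:ℝ) < y' := hy'
      have hyy' : (y + y') ∈ Ioi (0:ℝ) := by simp only [mem_Ioi]; linarith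
      have hmlb : δ ≤ m y' := by
        refine le_trans (le_min hy1 (hy2 hyy')) ?_
        refine Finset.single_le_sum (f := fun k' => min (lam k k' y') (lam k k' (y + y')))
          (fun k' h => ?_) hk₀S
        exact le_min (hpos k k' (hne k' h) y' hy'0.le).le
          (hpos k k' (hne k' h) (y + y') (by linarith)).le
      have hfval : f y' = Real.exp (-(G y')) * m y' := hfeq hy'
      rw [hfval]
      have hexp : Real.exp (-C * y') ≤ Real.exp (-(G y')) := by
        apply Real.exp_le_exp.mpr
        have := hGub y' hy'0
        nlinarith
      calc δ * Real.exp (-C * y') = Real.exp (-C * y') * δ := mul_comm _ _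
        _ ≤ Real.exp (-(G y')) * m y' :=
          mul_le_mul hexp hmlb hδ.le (Real.exp_pos _).le
    have hval : δ * I = ∫ y' in Ioi (0:ℝ), δ * Real.exp (-C * y') := by
      rw [hIdef, integral_const_mul]
    rw [hP k y, hval]
    exact hcompare
  -- combine over the finitely many states
  have hXne : Nonempty X := Fintype.card_pos_iff.mp (by omega)
  choose F hF1 hF2 using key
  have hSne : (Finset.univ : Finset X).Nonempty := Finset.univ_nonempty
  refine ⟨Finset.univ.inf' hSne F, ?_, ?_⟩
  · rw [Finset.lt_inf'_iff]
    exact fun k _ => hF1 k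
  · intro k y hy
    exact le_trans (Finset.inf'_le F (Finset.mem_univ k)) (hF2 k y hy)
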